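/- Let R be a Prüfer domain with fraction field K and let n ∈ ℕ. Every finitely generated R-submodule of K^n is a projective R-module. -/

import Mathlib

theorem mem_mul_sum_rep {R : Type*} [CommRing R] {I J : Ideal R} {c : R} (h : c ∈ I * J) :
    ∃ (m : ℕ) (a b : Fin m → R), (∀ i, a i ∈ I) ∧ (∀ i, b i ∈ J) ∧ c = ∑ i, a i * b i := by
  refine Submodule.mul_induction_on h ?_ ?_
  · intro x hx y hy
    exact ⟨1, fun _ => x, fun _ => y, fun _ => hx, fun _ => hy, by simp⟩
  · rintro x y ⟨m₁, a₁, b₁, ha₁, hb₁, rfl⟩ ⟨m₂, a₂, b₂, ha₂, hb₂, rfl⟩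
    refine ⟨m₁ + m₂, Fin.append a₁ a₂, Fin.append b₁ b₂, ?_, ?_, ?_⟩
    · exact fun i => i.addCases (fun j => by simpa using ha₁ j) (fun j => by simpa using ha₂ j)
    · exact fun i => i.addCases (fun j => by simpa using hb₁ j) (fun j => by simpa using hb₂ j)
    · rw [Fin.sum_univ_add]; simp

theorem proj_of_inv {R : Type*} [CommRing R] [IsDomain R] (I J : Ideal R) (c : R)
    (hc : c ≠ 0) (h : I * J = Ideal.span {c}) : Module.Projective R I := by
  have hcmem : c ∈ I * J := h ▸ Ideal.mem_span_singleton_self c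
  obtain ⟨m, a, b, ha, hb, hsum⟩ := mem_mul_sum_rep hcmem
  have key : ∀ (x : I) (i : Fin m), ∃ t : R, t * c = (x : R) * b i := by
    intro x i
    have hx : (x : R) * b i ∈ I * J := Ideal.mul_mem_mul x.2 (hb i)
    rw [h, Ideal.mem_span_singleton'] at hx
    exact hx
  choose r hr using key
  have hadd : ∀ x y i, r (x + y) i = r x i + r y i := by
    intro x y i
    apply mul_right_cancel₀ hc
    rw [add_mul, hr, hr, hr]; push_cast; ring
  have hsmul : ∀ (t : R) x i, r (t • x) i = t * r x i := by
    intro t x i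
    apply mul_right_cancel₀ hc
    rw [hr, mul_assoc, hr]
    simp only [Submodule.coe_smul, smul_eq_mul]; ring
  refine Module.Projective.of_split (M := Fin m → R)
    ({ toFun := fun x i => r x i,
       map_add' := fun x y => funext (hadd x y),
       map_smul' := fun t x => funext (hsmul t x) })
    (∑ i : Fin m, (LinearMap.proj i).smulRight (⟨a i, ha i⟩ : I)) ?_
  ext x
  have : ((∑ i : Fin m, (LinearMap.proj (R := R) (φ := fun _ : Fin m => R) i).smulRight
      (⟨a i, ha i⟩ : I)) (fun i => r x i) : R) = ∑ i : Fin m, r x i * a i := by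
    simp [LinearMap.sum_apply, smul_eq_mul]
  simp only [LinearMap.coe_comp, Function.comp_apply, LinearMap.coe_mk, AddHom.coe_mk,
    LinearMap.id_coe, id_eq]
  rw [this]
  apply mul_right_cancel₀ hc
  rw [Finset.sum_mul]
  calc ∑ i : Fin m, r x i * a i * c = ∑ i : Fin m, ((x : R) * b i) * a i := by
        refine Finset.sum_congr rfl fun i _ => ?_
        rw [mul_right_comm, hr]
    _ = (x : R) * ∑ i : Fin m, a i * b i := by rw [Finset.mul_sum]; exact Finset.sum_congr rfl fun i _ => by ring
    _ = (x : R) * c := by rw [← hsum]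

theorem fg_sub_K_proj {R : Type*} [CommRing R] [IsDomain R]
    (hpruf : ∀ I : Ideal R, I.FG → I ≠ ⊥ →
      ∃ (J : Ideal R) (c : R), J.FG ∧ c ≠ 0 ∧ I * J = Ideal.span {c})
    (K : Type*) [Field K] [Algebra R K] [IsFractionRing R K]
    (M : Submodule R K) (hM : M.FG) : Module.Projective R ↥M := by
  by_cases hbot : M = ⊥
  · subst hbot
    infer_instance
  · obtain ⟨s, hs⟩ := hM
    obtain ⟨b, hb⟩ := IsLocalization.exist_integer_multiples_of_finset (nonZeroDivisors R) s
    set μ : K →ₗ[R] K := LinearMap.lsmul R K (b : R) with hμ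
    have hb0 : (b : R) ≠ 0 := nonZeroDivisors.coe_ne_zero b
    have halg : Function.Injective (algebraMap R K) := IsFractionRing.injective R K
    have hbK : algebraMap R K (b : R) ≠ 0 := fun h => hb0 (halg (by rw [h, map_zero]))
    have hinj : Function.Injective μ := by
      intro x y hxy
      have h2 : algebraMap R K (b : R) * x = algebraMap R K (b : R) * y := by
        simpa [hμ, Algebra.smul_def] using hxy
      exact mul_left_cancel₀ hbK h2
    have hle : M.map μ ≤ LinearMap.range (Algebra.linearMap R K) := by
      rw [← hs, Submodule.map_span, Submodule.span_le]
      rintro x ⟨y, hy, rfl⟩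
      obtain ⟨r, hr⟩ := hb y hy
      exact ⟨r, hr⟩
    set I : Ideal R := Submodule.comap (Algebra.linearMap R K) (M.map μ) with hI
    have hmapI : Submodule.map (Algebra.linearMap R K) I = M.map μ := by
      rw [hI, Submodule.map_comap_eq, inf_eq_right.2 hle]
    have halginj : Function.Injective (Algebra.linearMap R K) := halg
    have e' : ↥I ≃ₗ[R] ↥(M.map μ) :=
      (Submodule.equivMapOfInjective (Algebra.linearMap R K) halginj I).trans
        (LinearEquiv.ofEq _ _ hmapI)
    have e : ↥I ≃ₗ[R] ↥M := e'.trans (Submodule.equivMapOfInjective μ hinj M).symm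
    have hfin : Module.Finite R ↥(M.map μ) :=
      Module.Finite.iff_fg.mpr (Submodule.FG.map μ ⟨s, hs⟩)
    have hIfin : Module.Finite R ↥I := Module.Finite.equiv e'.symm
    have hIfg : I.FG := Module.Finite.iff_fg.mp hIfin
    have hIne : I ≠ ⊥ := by
      intro h
      apply hbot
      have h2 : Submodule.map μ M = Submodule.map μ ⊥ := by
        rw [Submodule.map_bot, ← hmapI, h, Submodule.map_bot]
      exact Submodule.map_injective_of_injective hinj h2
    obtain ⟨J, c, _, hc, hIJ⟩ := hpruf I hIfg hIne
    have := proj_of_inv I J c hc hIJ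
    exact Module.Projective.of_equiv e

theorem aux_proj {R : Type*} [CommRing R] [IsDomain R]
    (hpruf : ∀ I : Ideal R, I.FG → I ≠ ⊥ →
      ∃ (J : Ideal R) (c : R), J.FG ∧ c ≠ 0 ∧ I * J = Ideal.span {c})
    (K : Type*) [Field K] [Algebra R K] [IsFractionRing R K] :
    ∀ (n : ℕ) (M : Type*) [AddCommGroup M] [Module R M] [Module.Finite R M]
      (f : M →ₗ[R] (Fin n → K)), Function.Injective f → Module.Projective R M := by
  intro n
  induction n with
  | zero =>
    intro M _ _ _ f hf
    haveI : Subsingleton M := hf.subsingleton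
    infer_instance
  | succ n ih =>
    intro M _ _ _ f hf
    set g : M →ₗ[R] K := (LinearMap.proj (Fin.last n)).comp f with hg
    set N := LinearMap.range g with hN
    have hNfin : Module.Finite R ↥N := Module.Finite.range g
    have hNfg : N.FG := Module.Finite.iff_fg.mp hNfin
    haveI hNproj : Module.Projective R ↥N := fg_sub_K_proj hpruf K N hNfg
    set g' : M →ₗ[R] ↥N := g.rangeRestrict with hg'
    have hg'surj : Function.Surjective g' := g.surjective_rangeRestrict
    obtain ⟨σ, hσ⟩ := Module.projective_lifting_property g' LinearMap.id hg'surj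
    set p : M →ₗ[R] M := LinearMap.id - σ.comp g' with hp
    have hpker : ∀ x, p x ∈ LinearMap.ker g' := by
      intro x
      simp only [hp, LinearMap.mem_ker, LinearMap.sub_apply, LinearMap.id_apply, map_sub,
        LinearMap.comp_apply]
      have := congrArg (fun h => h (g' x)) (congrArg DFunLike.coe hσ)
      simp only [LinearMap.comp_apply, LinearMap.id_apply] at this
      rw [this, sub_self]
    set p' : M →ₗ[R] ↥(LinearMap.ker g') := p.codRestrict _ hpker with hp'
    have hp'surj : Function.Surjective p' := by
      intro x
      refine ⟨(x : M), ?_⟩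
      apply Subtype.ext
      simp only [hp', LinearMap.codRestrict_apply, hp, LinearMap.sub_apply, LinearMap.id_apply,
        LinearMap.comp_apply]
      have hx : g' (x : M) = 0 := x.2
      rw [hx, map_zero, sub_zero]
    haveI hkfin : Module.Finite R ↥(LinearMap.ker g') := Module.Finite.of_surjective p' hp'surj
    -- embed the kernel in Fin n → K
    set j : (Fin (n + 1) → K) →ₗ[R] (Fin n → K) := LinearMap.funLeft R K Fin.castSucc with hj
    set e : ↥(LinearMap.ker g') →ₗ[R] (Fin n → K) :=
      (j.comp f).comp (LinearMap.ker g').subtype with he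
    have heinj : Function.Injective e := by
      intro x y hxy
      apply Subtype.ext
      apply hf
      funext i
      induction i using Fin.lastCases with
      | last =>
        have hx : g (x : M) = 0 := congrArg Subtype.val (x.2 : g' (x : M) = 0)
        have hy : g (y : M) = 0 := congrArg Subtype.val (y.2 : g' (y : M) = 0)
        simp only [hg, LinearMap.comp_apply, LinearMap.proj_apply] at hx hy
        rw [hx, hy]
      | cast i =>
        have := congrArg (fun h => h i) hxy
        simpa [he, hj, LinearMap.funLeft] using this
    haveI hkproj : Module.Projective R ↥(LinearMap.ker g') :=
      ih ↥(LinearMap.ker g') e heinj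
    -- split M as ker × N
    refine Module.Projective.of_split (M := ↥(LinearMap.ker g') × ↥N)
      (p'.prod g') (LinearMap.coprod (LinearMap.ker g').subtype σ) ?_
    ext x
    simp only [LinearMap.comp_apply, LinearMap.prod_apply, Function.prod, LinearMap.coprod_apply,
      LinearMap.id_apply, hp', LinearMap.codRestrict_apply, Submodule.coe_subtype, hp,
      LinearMap.sub_apply, LinearMap.id_apply, LinearMap.comp_apply]
    abel

/-- Over a Prüfer domain `R` with fraction field `K`, every finitely generated
`R`-submodule of `K^n` is projective. -/
theorem stmt_8 {R : Type*} [CommRing R] [IsDomain R]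
    (hpruf : ∀ I : Ideal R, I.FG → I ≠ ⊥ →
      ∃ (J : Ideal R) (c : R), J.FG ∧ c ≠ 0 ∧ I * J = Ideal.span {c})
    (K : Type*) [Field K] [Algebra R K] [IsFractionRing R K]
    (n : ℕ) (M : Submodule R (Fin n → K)) (hM : M.FG) :
    Module.Projective R ↥M := by
  haveI : Module.Finite R ↥M := Module.Finite.iff_fg.mpr hM
  exact aux_proj hpruf K n ↥M M.subtype Subtype.val_injective
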